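/- For every alphabet Σ with at least two symbols, the family O(Σ) is closed under concatenation: if L₁, L₂ ∈ O(Σ) then L₁·L₂ ∈ O(Σ). -/

import Mathlib

/-- A state `q` of a DFA is *observable* if some word leads from it to an accepting state. -/
def ObsState {α σ : Type} (M : DFA α σ) (q : σ) : Prop :=
  ∃ w : List α, M.evalFrom q w ∈ M.accept

/-- A state is *semi-observable* if it is observable and some single input symbol
leads from it to a non-observable state. -/
def SemiObsState {α σ : Type} (M : DFA α σ) (q : σ) : Prop :=
  ObsState M q ∧ ∃ a : α, ¬ ObsState M (M.step q a)

/-- All states of the DFA are accessible from the start state. -/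
def Accessible {α σ : Type} (M : DFA α σ) : Prop :=
  ∀ q : σ, ∃ w : List α, M.eval w = q

/-- `L` is accepted by some (completely specified, accessible) DFA all of whose
states are observable.  This is membership in the family `O` over the alphabet `α`. -/
def AcceptsObservably (α : Type) (L : Language α) : Prop :=
  ∃ (σ : Type) (_ : Fintype σ) (M : DFA α σ),
    Accessible M ∧ (∀ q : σ, ObsState M q) ∧ M.accepts = L

/-- Membership in the family `T_k`: `L` is accepted by some accessible DFA with at
most `k` semi-observable states. -/
def InT (α : Type) (k : ℕ) (L : Language α) : Prop :=
  ∃ (σ : Type) (_ : Fintype σ) (M : DFA α σ),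
    Accessible M ∧ M.accepts = L ∧ {q : σ | SemiObsState M q}.ncard ≤ k

/-- The alphabet (the whole type `α`) is minimal for `L`: every letter occurs in some word of `L`. -/
def MinimalAlphabet {α : Type} (L : Language α) : Prop :=
  ∀ a : α, ∃ w ∈ L, a ∈ w

/-! ### Auxiliary constructions -/

section Restrict

variable {α σ : Type} (M : DFA α σ)

/-- The set of reachable states. -/
def ReachSet : Set σ := {q | ∃ w, M.eval w = q}

/-- The restriction of a DFA to its reachable states. -/
def restrictDFA : DFA α (ReachSet M) where
  step p a := ⟨M.step p.1 a, by
    obtain ⟨w, hw⟩ := p.2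
    exact ⟨w ++ [a], by simp [hw]⟩⟩
  start := ⟨M.start, ⟨[], rfl⟩⟩
  accept := {p | p.1 ∈ M.accept}

lemma restrictDFA_evalFrom (p : ReachSet M) (w : List α) :
    ((restrictDFA M).evalFrom p w).1 = M.evalFrom p.1 w := by
  induction w generalizing p with
  | nil => rfl
  | cons a w ih =>
      show ((restrictDFA M).evalFrom ((restrictDFA M).step p a) w).1
        = M.evalFrom (M.step p.1 a) w
      exact ih _

lemma restrictDFA_eval (w : List α) :
    ((restrictDFA M).eval w).1 = M.eval w :=
  restrictDFA_evalFrom M _ w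

lemma restrictDFA_accessible : Accessible (restrictDFA M) := by
  rintro ⟨q, w, hw⟩
  exact ⟨w, Subtype.ext (by simpa using (restrictDFA_eval M w).trans hw)⟩

lemma restrictDFA_accepts : (restrictDFA M).accepts = M.accepts := by
  ext w
  rw [DFA.mem_accepts, DFA.mem_accepts]
  show ((restrictDFA M).eval w).1 ∈ M.accept ↔ _
  rw [restrictDFA_eval]

lemma restrictDFA_obs (h : ∀ q : σ, ObsState M q) (p : ReachSet M) :
    ObsState (restrictDFA M) p := by
  obtain ⟨w, hw⟩ := h p.1
  exact ⟨w, show ((restrictDFA M).evalFrom p w).1 ∈ M.accept by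
    rw [restrictDFA_evalFrom]; exact hw⟩

end Restrict

section Cat

variable {α σ₁ σ₂ : Type} (M₁ : DFA α σ₁) (M₂ : DFA α σ₂)

/-- Injected set of `M₂`-states when the `M₁`-state is accepting. -/
def catInj (q : σ₁) : Set σ₂ := {s | s = M₂.start ∧ q ∈ M₁.accept}

/-- The concatenation automaton. -/
def catDFA : DFA α (σ₁ × Set σ₂) where
  step p a := (M₁.step p.1 a,
    (fun s => M₂.step s a) '' p.2 ∪ catInj M₁ M₂ (M₁.step p.1 a))
  start := (M₁.start, catInj M₁ M₂ M₁.start)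
  accept := {p | ∃ s ∈ p.2, s ∈ M₂.accept}

lemma catDFA_evalFrom_fst (p : σ₁ × Set σ₂) (w : List α) :
    ((catDFA M₁ M₂).evalFrom p w).1 = M₁.evalFrom p.1 w := by
  induction w generalizing p with
  | nil => rfl
  | cons a w ih =>
      show ((catDFA M₁ M₂).evalFrom ((catDFA M₁ M₂).step p a) w).1
        = M₁.evalFrom (M₁.step p.1 a) w
      exact ih _

lemma catDFA_evalFrom_snd_mem {p : σ₁ × Set σ₂} {s : σ₂} (hs : s ∈ p.2) (w : List α) :
    M₂.evalFrom s w ∈ ((catDFA M₁ M₂).evalFrom p w).2 := by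
  induction w generalizing p s with
  | nil => exact hs
  | cons a w ih =>
      show M₂.evalFrom (M₂.step s a) w
        ∈ ((catDFA M₁ M₂).evalFrom ((catDFA M₁ M₂).step p a) w).2
      exact ih (Or.inl ⟨s, hs, rfl⟩)

lemma catDFA_inj_mem {p : σ₁ × Set σ₂} {w : List α} (hw : w ≠ [])
    (hacc : M₁.evalFrom p.1 w ∈ M₁.accept) :
    M₂.start ∈ ((catDFA M₁ M₂).evalFrom p w).2 := by
  obtain ⟨u, a, rfl⟩ := List.eq_nil_or_concat w |>.resolve_left hw
  rw [List.concat_eq_append] at hacc ⊢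
  rw [DFA.evalFrom_append_singleton]
  show M₂.start ∈ _ ∪ catInj M₁ M₂ (M₁.step ((catDFA M₁ M₂).evalFrom p u).1 a)
  rw [catDFA_evalFrom_fst]
  rw [DFA.evalFrom_append_singleton] at hacc
  exact Or.inr ⟨rfl, hacc⟩

lemma catDFA_eval_fst (w : List α) :
    ((catDFA M₁ M₂).eval w).1 = M₁.eval w :=
  catDFA_evalFrom_fst M₁ M₂ _ w

lemma catDFA_eval_snd (w : List α) :
    ((catDFA M₁ M₂).eval w).2
      = {t | ∃ u v, u ++ v = w ∧ M₁.eval u ∈ M₁.accept ∧ M₂.eval v = t} := by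
  induction w using List.reverseRecOn with
  | nil =>
      ext t
      show t ∈ catInj M₁ M₂ M₁.start ↔ _
      constructor
      · rintro ⟨rfl, h⟩
        exact ⟨[], [], rfl, h, rfl⟩
      · rintro ⟨u, v, huv, hu, hv⟩
        obtain ⟨rfl, rfl⟩ := List.append_eq_nil_iff.mp huv
        simp only [DFA.eval_nil] at hu hv
        exact ⟨hv.symm, hu⟩
  | append_singleton w a ih =>
      ext t
      rw [DFA.eval_append_singleton]
      show t ∈ (fun s => M₂.step s a) '' ((catDFA M₁ M₂).eval w).2
          ∪ catInj M₁ M₂ (M₁.step ((catDFA M₁ M₂).eval w).1 a) ↔ _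
      rw [catDFA_eval_fst, ih]
      constructor
      · rintro (⟨s, ⟨u, v, rfl, hu, rfl⟩, rfl⟩ | ht)
        · exact ⟨u, v ++ [a], by simp, hu, by simp [DFA.eval]⟩
        · obtain ⟨rfl, h⟩ := ht
          exact ⟨w ++ [a], [], by simp, by simpa using h, rfl⟩
      · rintro ⟨u, v, huv, hu, rfl⟩
        rcases List.eq_nil_or_concat v with rfl | ⟨v', b, rfl⟩
        · right
          rw [List.append_nil] at huv
          subst huv
          simp only [DFA.eval_append_singleton] at hu
          exact ⟨rfl, hu⟩
        · left
          rw [List.concat_eq_append, ← List.append_assoc] at huv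
          obtain ⟨huv', hba⟩ : u ++ v' = w ∧ [b] = [a] :=
            List.append_inj' huv rfl
          obtain rfl : b = a := by simpa using hba
          refine ⟨M₂.eval v', ⟨u, v', huv', hu, rfl⟩, ?_⟩
          simp [List.concat_eq_append, DFA.eval]

lemma catDFA_accepts : (catDFA M₁ M₂).accepts = M₁.accepts * M₂.accepts := by
  ext w
  rw [DFA.mem_accepts, Language.mem_mul]
  show (∃ s ∈ ((catDFA M₁ M₂).eval w).2, s ∈ M₂.accept) ↔ _
  rw [catDFA_eval_snd]
  constructor
  · rintro ⟨s, ⟨u, v, huv, hu, rfl⟩, hs⟩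
    exact ⟨u, (DFA.mem_accepts M₁).mpr hu, v, (DFA.mem_accepts M₂).mpr hs, huv⟩
  · rintro ⟨u, hu, v, hv, huv⟩
    exact ⟨M₂.eval v, ⟨u, v, huv, (DFA.mem_accepts M₁).mp hu, rfl⟩, (DFA.mem_accepts M₂).mp hv⟩

lemma catDFA_obs [Nonempty α] (h₁ : ∀ q, ObsState M₁ q) (h₂ : ∀ q, ObsState M₂ q)
    (p : σ₁ × Set σ₂) : ObsState (catDFA M₁ M₂) p := by
  obtain ⟨a⟩ := ‹Nonempty α›
  obtain ⟨w', hw'⟩ := h₁ (M₁.step p.1 a)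
  have hw1 : M₁.evalFrom p.1 (a :: w') ∈ M₁.accept := hw'
  have hstart : M₂.start ∈ ((catDFA M₁ M₂).evalFrom p (a :: w')).2 :=
    catDFA_inj_mem M₁ M₂ (by simp) hw1
  obtain ⟨w₂, hw₂⟩ := h₂ M₂.start
  refine ⟨(a :: w') ++ w₂, ?_⟩
  rw [DFA.evalFrom_of_append]
  exact ⟨M₂.evalFrom M₂.start w₂, catDFA_evalFrom_snd_mem M₁ M₂ hstart w₂, hw₂⟩

end Cat

/-- For an alphabet with at least two symbols, `O(Σ)` is closed under concatenation. -/
theorem OSigma_closed_concat {α : Type} [Fintype α] (hcard : 2 ≤ Fintype.card α)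
    (L₁ L₂ : Language α)
    (h₁ : AcceptsObservably α L₁ ∧ MinimalAlphabet L₁)
    (h₂ : AcceptsObservably α L₂ ∧ MinimalAlphabet L₂) :
    AcceptsObservably α (L₁ * L₂) ∧ MinimalAlphabet (L₁ * L₂) := by
  have hne : Nonempty α := Fintype.card_pos_iff.mp (by omega)
  obtain ⟨⟨σ₁, _, M₁, _, hobs₁, hacc₁⟩, hmin₁⟩ := h₁
  obtain ⟨⟨σ₂, _, M₂, _, hobs₂, hacc₂⟩, hmin₂⟩ := h₂
  constructor
  · -- use the restriction of the concatenation automaton to reachable states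
    classical
    have hfin : Finite (σ₁ × Set σ₂) := by
      infer_instance
    refine ⟨ReachSet (catDFA M₁ M₂), @Fintype.ofFinite _ (by exact Subtype.finite),
      restrictDFA (catDFA M₁ M₂), restrictDFA_accessible _, ?_, ?_⟩
    · exact restrictDFA_obs _ (catDFA_obs M₁ M₂ hobs₁ hobs₂)
    · rw [restrictDFA_accepts, catDFA_accepts, hacc₁, hacc₂]
  · intro a
    obtain ⟨w₁, hw₁, ha⟩ := hmin₁ a
    obtain ⟨w₂, hw₂, -⟩ := hmin₂ (Classical.arbitrary α)
    exact ⟨w₁ ++ w₂, Language.append_mem_mul hw₁ hw₂, by simp [ha]⟩
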